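/- Let ω, γ, M₁, M₂ > 0. Then there exists a unique triple (u_∞, w_∞, z_∞) of nonnegative real numbers satisfying the system ω u_∞ + γ z_∞ = M₁, γ (w_∞ + z_∞) = M₂, and u_∞ w_∞ = z_∞; moreover each of u_∞, w_∞, z_∞ is strictly positive. -/

import Mathlib

/-- Well-posedness of the algebraic equilibrium system: for `ω, γ, M₁, M₂ > 0` there is a
unique triple `(u∞, w∞, z∞)` of nonnegative reals with `ω u∞ + γ z∞ = M₁`,
`γ (w∞ + z∞) = M₂` and `u∞ w∞ = z∞`; moreover each component is strictly positive. -/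
theorem equilibrium_system_wellposed (ω γ M₁ M₂ : ℝ)
    (hω : 0 < ω) (hγ : 0 < γ) (hM₁ : 0 < M₁) (hM₂ : 0 < M₂) :
    (∃! p : ℝ × ℝ × ℝ,
        (0 ≤ p.1 ∧ 0 ≤ p.2.1 ∧ 0 ≤ p.2.2) ∧
        ω * p.1 + γ * p.2.2 = M₁ ∧
        γ * (p.2.1 + p.2.2) = M₂ ∧
        p.1 * p.2.1 = p.2.2) ∧
    ∀ p : ℝ × ℝ × ℝ,
      ((0 ≤ p.1 ∧ 0 ≤ p.2.1 ∧ 0 ≤ p.2.2) ∧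
        ω * p.1 + γ * p.2.2 = M₁ ∧
        γ * (p.2.1 + p.2.2) = M₂ ∧
        p.1 * p.2.1 = p.2.2) →
      0 < p.1 ∧ 0 < p.2.1 ∧ 0 < p.2.2 := by
  have hγ0 : γ ≠ 0 := ne_of_gt hγ
  have hω0 : ω ≠ 0 := ne_of_gt hω
  -- positivity of any solution
  have Hpos : ∀ p : ℝ × ℝ × ℝ,
      ((0 ≤ p.1 ∧ 0 ≤ p.2.1 ∧ 0 ≤ p.2.2) ∧
        ω * p.1 + γ * p.2.2 = M₁ ∧
        γ * (p.2.1 + p.2.2) = M₂ ∧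
        p.1 * p.2.1 = p.2.2) →
      0 < p.1 ∧ 0 < p.2.1 ∧ 0 < p.2.2 := by
    rintro ⟨u, w, z⟩ ⟨⟨hu, hw, hz⟩, e1, e2, e3⟩
    simp only at *
    have hu' : 0 < u := by
      rcases hu.lt_or_eq with h | h
      · exact h
      · exfalso
        have hz0 : z = 0 := by rw [← e3, ← h, zero_mul]
        rw [← h, hz0] at e1
        simp at e1
        linarith
    have hw' : 0 < w := by
      rcases hw.lt_or_eq with h | h
      · exact h
      · exfalso
        have hz0 : z = 0 := by rw [← e3, ← h, mul_zero]
        rw [← h, hz0] at e2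
        simp at e2
        linarith
    exact ⟨hu', hw', by rw [← e3]; exact mul_pos hu' hw'⟩
  refine ⟨?_, Hpos⟩
  -- quadratic data
  set b : ℝ := M₂ - M₁ + ω with hb
  set D : ℝ := b ^ 2 + 4 * ω * M₁ with hD
  have hD0 : 0 ≤ D := by nlinarith [sq_nonneg b]
  set s : ℝ := Real.sqrt D with hs
  have hs0 : 0 ≤ s := Real.sqrt_nonneg D
  have hs2 : s ^ 2 = D := Real.sq_sqrt hD0
  have hsb : b < s := by nlinarith [mul_pos hω hM₁]
  set u : ℝ := (s - b) / (2 * ω) with hudef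
  have hu0 : 0 < u := by
    apply div_pos (by linarith) (by linarith)
  have hq : ω * u ^ 2 + b * u = M₁ := by
    rw [hudef]
    field_simp
    nlinarith [hs2]
  set z : ℝ := (M₁ - ω * u) / γ with hzdef
  set w : ℝ := M₂ / γ - z with hwdef
  have e1 : ω * u + γ * z = M₁ := by rw [hzdef]; field_simp; ring
  have e2 : γ * (w + z) = M₂ := by rw [hwdef]; field_simp; ring
  have e3 : u * w = z := by
    rw [hwdef, hzdef]
    field_simp
    nlinarith [hq]
  have hz0 : 0 ≤ z := by
    by_contra h
    push_neg at h
    have hw0 : w < 0 := by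
      have : u * w < 0 := by rw [e3]; exact h
      exact neg_of_mul_neg_right this hu0.le
    nlinarith [e2]
  have hw0 : 0 ≤ w := by
    by_contra h
    push_neg at h
    have : z < 0 := by rw [← e3]; exact mul_neg_of_pos_of_neg hu0 h
    linarith
  refine ⟨(u, w, z), ⟨⟨hu0.le, hw0, hz0⟩, e1, e2, e3⟩, ?_⟩
  -- uniqueness
  rintro ⟨u', w', z'⟩ hp
  obtain ⟨hu', hw', hz'⟩ := Hpos _ hp
  obtain ⟨_, f1, f2, f3⟩ := hp
  simp only at f1 f2 f3 hu' hw' hz'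
  have hq' : ω * u' ^ 2 + b * u' = M₁ := by
    rw [hb]; linear_combination (u' + 1) * f1 - u' * f2 + γ * f3
  have key : (u' - u) * (ω * (u' + u) + b) = 0 := by
    linear_combination hq' - hq
  have hfac : 0 < ω * (u' + u) + b := by
    have hgw : γ * w' = M₂ - M₁ + ω * u' := by linarith [f1, f2]
    have : 0 < γ * w' := mul_pos hγ hw'
    nlinarith
  have huu : u' = u := by
    rcases mul_eq_zero.mp key with h | h
    · linarith [sub_eq_zero.mp h]
    · linarith
  have hzz : z' = z := by
    have h : γ * z' = γ * z := by
      rw [huu] at f1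
      linear_combination f1 - e1
    exact mul_left_cancel₀ hγ0 h
  have hww : w' = w := by
    have h : γ * w' = γ * w := by
      rw [hzz] at f2
      linear_combination f2 - e2
    exact mul_left_cancel₀ hγ0 h
  simp [Prod.ext_iff, huu, hzz, hww]
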